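/- Let p be a full-support prior on {x_1,…,x_N}, let ε ≥ 0, and let P be an N×M privacy mechanism satisfying ε-PML with respect to p. Fix distinct columns u ≠ v and define Q from P by replacing column v with the entrywise sum of columns u and v (Q(i,v) = P(i,u) + P(i,v)) and replacing column u with the all-zero column, leaving all other columns unchanged. Then Q is a valid privacy mechanism satisfying ε-PML, and for every sublinear μ : [0,∞)^N → [0,∞) the sub-convex utility satisfies U(Q) ≤ U(P). -/

import Mathlib

open scoped BigOperators Classical

noncomputable section

/-- The output distribution `P_Y(j) = ∑ i, p i * P i j` induced by a prior `p`
and a mechanism `P`. -/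
def outDist {N M : ℕ} (p : Fin N → ℝ) (P : Matrix (Fin N) (Fin M) ℝ) (j : Fin M) : ℝ :=
  ∑ i, p i * P i j

/-- A privacy mechanism: nonnegative entries, rows summing to one. -/
def IsMechanism {N M : ℕ} (P : Matrix (Fin N) (Fin M) ℝ) : Prop :=
  (∀ i j, 0 ≤ P i j) ∧ ∀ i, ∑ j, P i j = 1

/-- Pointwise maximal leakage to output `j`:
`ℓ(X → y_j) = log((max_i P i j) / P_Y(j))`. -/
def pml {N M : ℕ} (p : Fin N → ℝ) (P : Matrix (Fin N) (Fin M) ℝ) (j : Fin M) : ℝ :=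
  Real.log ((⨆ i, P i j) / outDist p P j)

/-- `P` satisfies `ε`-PML (w.r.t. prior `p`): the leakage of every output of
positive probability is at most `ε`. -/
def SatisfiesPML {N M : ℕ} (p : Fin N → ℝ) (ε : ℝ) (P : Matrix (Fin N) (Fin M) ℝ) : Prop :=
  ∀ j, 0 < outDist p P j → pml p P j ≤ ε

/-- A sublinear function `μ : [0,∞)^N → [0,∞)`: nonnegative, positively
homogeneous and subadditive on the nonnegative orthant. -/
def Sublinear {N : ℕ} (μ : (Fin N → ℝ) → ℝ) : Prop :=
  (∀ x, (∀ i, 0 ≤ x i) → 0 ≤ μ x) ∧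
  (∀ (c : ℝ), 0 ≤ c → ∀ x, (∀ i, 0 ≤ x i) → μ (c • x) = c * μ x) ∧
  (∀ x y, (∀ i, 0 ≤ x i) → (∀ i, 0 ≤ y i) → μ (x + y) ≤ μ x + μ y)

/-- The sub-convex utility associated with `μ`: `U(P) = ∑ j, μ(P_j)` where
`P_j` is the `j`-th column of `P`. -/
def utility {N M : ℕ} (μ : (Fin N → ℝ) → ℝ) (P : Matrix (Fin N) (Fin M) ℝ) : ℝ :=
  ∑ j, μ (fun i => P i j)

end

/-- **Merging two columns.** Merging columns `u ≠ v` of an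
`ε`-PML mechanism `P` (adding column `u` onto column `v` and zeroing column
`u`) yields a valid `ε`-PML mechanism whose sub-convex utility does not
exceed that of `P`. -/
theorem merge_columns (N M : ℕ) (p : Fin N → ℝ)
    (hp : ∀ i, 0 < p i) (hpsum : ∑ i, p i = 1)
    (ε : ℝ) (hε : 0 ≤ ε)
    (P : Matrix (Fin N) (Fin M) ℝ)
    (hmech : IsMechanism P) (hpml : SatisfiesPML p ε P)
    (u v : Fin M) (huv : u ≠ v) :
    IsMechanism (Matrix.of fun i j =>
      if j = v then P i u + P i v else if j = u then 0 else P i j) ∧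
    SatisfiesPML p ε (Matrix.of fun i j =>
      if j = v then P i u + P i v else if j = u then 0 else P i j) ∧
    ∀ μ : (Fin N → ℝ) → ℝ, Sublinear μ →
      utility μ (Matrix.of fun i j =>
          if j = v then P i u + P i v else if j = u then 0 else P i j)
        ≤ utility μ P := by
    classical
  set Q : Matrix (Fin N) (Fin M) ℝ := Matrix.of fun i j =>
      if j = v then P i u + P i v else if j = u then 0 else P i j with hQ
  have hQapp : ∀ i j, Q i j = if j = v then P i u + P i v else if j = u then 0 else P i j :=
    fun i j => rfl
  obtain ⟨hPnn, hProw⟩ := hmech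
  have hvu : v ≠ u := huv.symm
  haveI hNE : Nonempty (Fin N) := by
    by_contra h
    rw [not_nonempty_iff] at h
    rw [Finset.sum_of_isEmpty] at hpsum
    norm_num at hpsum
  have hbdd : ∀ f : Fin N → ℝ, BddAbove (Set.range f) :=
    fun f => Set.Finite.bddAbove (Set.finite_range f)
  have hQu : ∀ i, Q i u = 0 := by intro i; simp [hQapp, huv]
  have hQv : ∀ i, Q i v = P i u + P i v := by intro i; simp [hQapp]
  have hQo : ∀ j, j ≠ u → j ≠ v → ∀ i, Q i j = P i j := by
    intro j hju hjv i; simp [hQapp, hju, hjv]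
  have key : ∀ f : Fin M → ℝ,
      ∑ j, f j = f u + (f v + ∑ j ∈ (Finset.univ.erase u).erase v, f j) := by
    intro f
    rw [Finset.add_sum_erase _ f
      (show v ∈ Finset.univ.erase u from Finset.mem_erase.mpr ⟨hvu, Finset.mem_univ v⟩)]
    rw [Finset.add_sum_erase _ f (Finset.mem_univ u)]
  have hrest : ∀ j ∈ (Finset.univ.erase u).erase v, ∀ i, Q i j = P i j := by
    intro j hj i
    rw [Finset.mem_erase, Finset.mem_erase] at hj
    exact hQo j hj.2.1 hj.1 i
  have hQnn : ∀ i j, 0 ≤ Q i j := by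
    intro i j
    rw [hQapp]
    split_ifs with h1 h2
    · exact add_nonneg (hPnn i u) (hPnn i v)
    · exact le_refl 0
    · exact hPnn i j
  have hQmech : IsMechanism Q := by
    refine ⟨hQnn, fun i => ?_⟩
    rw [key (fun j => Q i j), hQu, hQv,
      Finset.sum_congr rfl (fun j hj => hrest j hj i)]
    have h2 := key (fun j => P i j)
    rw [hProw i] at h2
    linarith
  have hDnn : ∀ j, 0 ≤ outDist p P j :=
    fun j => Finset.sum_nonneg fun i _ => mul_nonneg (hp i).le (hPnn i j)
  have hsup : ∀ j, (⨆ i, P i j) ≤ Real.exp ε * outDist p P j := by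
    intro j
    rcases (hDnn j).eq_or_lt with hD0 | hDpos
    · have hz : ∀ i, P i j = 0 := by
        intro i
        have h := (Finset.sum_eq_zero_iff_of_nonneg
          (fun i _ => mul_nonneg (hp i).le (hPnn i j))).mp hD0.symm i (Finset.mem_univ i)
        rcases mul_eq_zero.mp h with h' | h'
        · exact absurd h' (hp i).ne'
        · exact h'
      rw [← hD0]
      simp [hz]
    · have hle := hpml j hDpos
      unfold pml at hle
      have hsupnn : 0 ≤ ⨆ i, P i j :=
        le_trans (hPnn (Classical.arbitrary _) j) (le_ciSup (hbdd (fun i => P i j)) (Classical.arbitrary _))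
      rcases hsupnn.eq_or_lt with hs0 | hspos
      · rw [← hs0]; positivity
      · have hdivpos : 0 < (⨆ i, P i j) / outDist p P j := div_pos hspos hDpos
        have h2 := (Real.log_le_iff_le_exp hdivpos).mp hle
        rw [div_le_iff₀ hDpos] at h2
        linarith
  have hDQv : outDist p Q v = outDist p P u + outDist p P v := by
    unfold outDist
    rw [← Finset.sum_add_distrib]
    exact Finset.sum_congr rfl fun i _ => by rw [hQv]; ring
  have hQpml : SatisfiesPML p ε Q := by
    intro j hj
    by_cases hjv : j = v
    · subst hjv
      have hsupQ : (⨆ i, Q i j) ≤ Real.exp ε * outDist p Q j := by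
        rw [hDQv, mul_add]
        have h1 : (⨆ i, Q i j) ≤ (⨆ i, P i u) + ⨆ i, P i j := by
          apply ciSup_le
          intro i
          rw [hQv]
          exact add_le_add (le_ciSup (hbdd (fun i => P i u)) i) (le_ciSup (hbdd (fun i => P i j)) i)
        exact h1.trans (add_le_add (hsup u) (hsup j))
      unfold pml
      have hsupnn : 0 ≤ ⨆ i, Q i j :=
        le_trans (hQnn (Classical.arbitrary _) j) (le_ciSup (hbdd (fun i => Q i j)) (Classical.arbitrary _))
      rcases hsupnn.eq_or_lt with hs0 | hspos
      · rw [← hs0]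
        simpa using hε
      · have hdiv : (⨆ i, Q i j) / outDist p Q j ≤ Real.exp ε :=
          (div_le_iff₀ hj).mpr hsupQ
        exact (Real.log_le_iff_le_exp (div_pos hspos hj)).mpr hdiv
    · by_cases hju : j = u
      · exfalso
        subst hju
        have hz : outDist p Q j = 0 := by
          unfold outDist; simp [hQu]
        rw [hz] at hj
        exact lt_irrefl _ hj
      · have hD : outDist p Q j = outDist p P j :=
          Finset.sum_congr rfl fun i _ => by rw [hQo j hju hjv]
        unfold pml
        rw [hD, iSup_congr (fun i => hQo j hju hjv i)]
        exact hpml j (hD ▸ hj)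
  refine ⟨hQmech, hQpml, ?_⟩
  rintro μ ⟨hμnn, hμhom, hμsub⟩
  have hμ0 : μ (fun _ => (0:ℝ)) = 0 := by
    have h := hμhom 0 le_rfl (fun _ => (0:ℝ)) (fun _ => le_rfl)
    exact (by simpa using h : μ 0 = 0)
  unfold utility
  rw [key (fun j => μ fun i => Q i j), key (fun j => μ fun i => P i j)]
  have e1 : μ (fun i => Q i u) = 0 := by
    rw [show (fun i => Q i u) = fun _ => (0:ℝ) from funext fun i => hQu i]
    exact hμ0
  have e2 : μ (fun i => Q i v) ≤ μ (fun i => P i u) + μ (fun i => P i v) := by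
    have h : (fun i => Q i v) = (fun i => P i u) + fun i => P i v := funext fun i => hQv i
    rw [h]
    exact hμsub _ _ (fun i => hPnn i u) (fun i => hPnn i v)
  have e3 : ∑ j ∈ (Finset.univ.erase u).erase v, μ (fun i => Q i j)
      = ∑ j ∈ (Finset.univ.erase u).erase v, μ (fun i => P i j) :=
    Finset.sum_congr rfl fun j hj => congrArg μ (funext (hrest j hj))
  linarith
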